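/- Let α ∈ ℝ[t] be nonzero and r₁, r₂, r₃ ∈ ℝ[t], and suppose the curve r = (r₁/α, r₂/α, r₃/α) is a Pythagorean-hodograph curve, i.e. there exists σ ∈ RatFunc ℝ with ((r₁/α)′)² + ((r₂/α)′)² + ((r₃/α)′)² = σ² in the field of real rational functions. Then there exists a nonzero A ∈ ℍ[t], reduced with respect to i, such that the framing condition holds: with b = −½(r₁·i + r₂·j + r₃·k), the polynomials α·b′ − α′·b and A i Ā commute, i.e. (α·b′ − α′·b)·(A i Ā) = (A i Ā)·(α·b′ − α′·b). -/

import Mathlib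

open Polynomial

noncomputable section

/-- The quaternion unit `i`. -/
def qi : Quaternion ℝ := ⟨0, 1, 0, 0⟩
/-- The quaternion unit `j`. -/
def qj : Quaternion ℝ := ⟨0, 0, 1, 0⟩
/-- The quaternion unit `k`. -/
def qk : Quaternion ℝ := ⟨0, 0, 0, 1⟩

/-- Embedding of real polynomials into quaternion polynomials (scalar coefficients). -/
def toQ : Polynomial ℝ →+* Polynomial (Quaternion ℝ) :=
  mapRingHom (algebraMap ℝ (Quaternion ℝ))

/-- Coefficientwise quaternion conjugation of a quaternion polynomial. -/
def pconj (p : Polynomial (Quaternion ℝ)) : Polynomial (Quaternion ℝ) :=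
  p.sum fun n a => monomial n (star a)

/-- `A ∈ ℍ[t]` is *reduced with respect to `i`* if it has no real polynomial factor of
positive degree and no right factor of positive degree all of whose coefficients lie in the
subalgebra of `ℍ` generated by `1` and `i`. -/
def ReducedWrtI (A : Polynomial (Quaternion ℝ)) : Prop :=
  (∀ ψ : Polynomial ℝ, ∀ A' : Polynomial (Quaternion ℝ), A = toQ ψ * A' → ψ.natDegree = 0) ∧
  (∀ A' R : Polynomial (Quaternion ℝ), A = A' * R →
    (∀ n, (R.coeff n).imJ = 0 ∧ (R.coeff n).imK = 0) → R.natDegree = 0)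

/-- The derivative of a real rational function, extending polynomial differentiation
(defined via the quotient rule on the canonical numerator and denominator). -/
def ratDeriv (f : RatFunc ℝ) : RatFunc ℝ :=
  (algebraMap (Polynomial ℝ) (RatFunc ℝ) (derivative f.num) *
      algebraMap (Polynomial ℝ) (RatFunc ℝ) f.denom -
    algebraMap (Polynomial ℝ) (RatFunc ℝ) f.num *
      algebraMap (Polynomial ℝ) (RatFunc ℝ) (derivative f.denom)) /
  algebraMap (Polynomial ℝ) (RatFunc ℝ) (f.denom ^ 2)

/-! ### Auxiliary lemmas -/

lemma pconj_coeff (p : Polynomial (Quaternion ℝ)) (n : ℕ) :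
    (pconj p).coeff n = star (p.coeff n) := by
  rw [pconj, Polynomial.sum_def, finset_sum_coeff]
  simp only [coeff_monomial]
  by_cases h : n ∈ p.support
  · rw [Finset.sum_eq_single n]
    · simp
    · intro b _ hb; simp [hb]
    · intro hn; exact absurd h hn
  · rw [Finset.sum_eq_zero]
    · simp [Polynomial.notMem_support_iff.mp h]
    · intro b hb
      by_cases hbn : b = n
      · subst hbn; exact absurd hb h
      · simp [hbn]

lemma pconj_mul (p q : Polynomial (Quaternion ℝ)) :
    pconj (p * q) = pconj q * pconj p := by
  refine Polynomial.ext fun n => ?_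
  simp only [pconj_coeff, coeff_mul, star_sum, star_mul]
  rw [← Finset.Nat.sum_antidiagonal_swap]; simp

lemma pconj_add (p q : Polynomial (Quaternion ℝ)) : pconj (p + q) = pconj p + pconj q :=
  Polynomial.ext fun n => by simp [pconj_coeff]

lemma pconj_C (a : Quaternion ℝ) : pconj (C a) = C (star a) :=
  Polynomial.ext fun n => by
    simp only [pconj_coeff, coeff_C]; split <;> simp

lemma pconj_toQ (f : Polynomial ℝ) : pconj (toQ f) = toQ f :=
  Polynomial.ext fun n => by
    simp [pconj_coeff, toQ, coeff_map, Quaternion.star_coe]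

lemma pconj_one : pconj 1 = 1 := by
  have := pconj_C 1; simpa using this

lemma star_qi : star qi = -qi := by ext <;> simp <;> simp [qi]
lemma star_qj : star qj = -qj := by ext <;> simp <;> simp [qj]
lemma star_qk : star qk = -qk := by ext <;> simp <;> simp [qk]
lemma qi_mul_qi : qi * qi = -1 := by ext <;> simp <;> simp [qi] <;> rfl
lemma qi_mul_qj : qi * qj = qk := by ext <;> simp <;> simp [qi, qj, qk]
lemma qj_mul_qi : qj * qi = -qk := by ext <;> simp <;> simp [qi, qj, qk]
lemma qj_mul_qj : qj * qj = -1 := by ext <;> simp <;> simp [qj] <;> rfl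
lemma qk_mul_qk : qk * qk = -1 := by ext <;> simp <;> simp [qk] <;> rfl
lemma qj_mul_qk : qj * qk = qi := by ext <;> simp <;> simp [qi, qj, qk]
lemma qk_mul_qj : qk * qj = -qi := by ext <;> simp <;> simp [qi, qj, qk]
lemma qk_mul_qi : qk * qi = qj := by ext <;> simp <;> simp [qi, qj, qk]
lemma qi_mul_qk : qi * qk = -qj := by ext <;> simp <;> simp [qi, qj, qk]

lemma C_real_comm (r : ℝ) (p : Polynomial (Quaternion ℝ)) :
    C ((algebraMap ℝ (Quaternion ℝ)) r) * p = p * C (algebraMap ℝ (Quaternion ℝ) r) :=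
  Polynomial.ext fun n => by
    simp only [coeff_C_mul, coeff_mul_C]
    exact Algebra.commutes r (p.coeff n)

lemma toQ_comm (f : Polynomial ℝ) (p : Polynomial (Quaternion ℝ)) :
    toQ f * p = p * toQ f := by
  induction f using Polynomial.induction_on with
  | C r => simpa [toQ] using C_real_comm r p
  | add f g hf hg => simp [map_add, add_mul, mul_add, hf, hg]
  | monomial n r ih =>
      have : toQ (C r * X ^ (n+1)) = C (algebraMap ℝ (Quaternion ℝ) r) * X ^ (n+1) := by
        simp [toQ]
      rw [this]
      have h1 : (X : Polynomial (Quaternion ℝ)) ^ (n+1) * p = p * X ^ (n+1) :=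
        ((commute_X p).pow_left (n+1)).eq
      rw [mul_assoc, h1, ← mul_assoc, C_real_comm, mul_assoc]

lemma sw1 (u : Quaternion ℝ) (f : Polynomial ℝ) (p : Polynomial (Quaternion ℝ)) :
    C u * (toQ f * p) = toQ f * (C u * p) := by
  rw [← mul_assoc, ← toQ_comm, mul_assoc]
lemma sw2 (u : Quaternion ℝ) (f : Polynomial ℝ) : C u * toQ f = toQ f * C u :=
  (toQ_comm f (C u)).symm
lemma fuse1 (f g : Polynomial ℝ) (p : Polynomial (Quaternion ℝ)) :
    toQ f * (toQ g * p) = toQ (f * g) * p := by rw [← mul_assoc, ← map_mul]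
lemma fuse2 (f g : Polynomial ℝ) : toQ f * toQ g = toQ (f * g) := (map_mul toQ f g).symm
lemma Cfuse1 (u v : Quaternion ℝ) (p : Polynomial (Quaternion ℝ)) :
    C u * (C v * p) = C (u * v) * p := by rw [← mul_assoc, ← C_mul]
lemma sw3 (f : Polynomial ℝ) (p q : Polynomial (Quaternion ℝ)) :
    p * (toQ f * q) = toQ f * (p * q) := by
  rw [← mul_assoc, ← toQ_comm, mul_assoc]
lemma Cfuse2 (u v : Quaternion ℝ) : C u * C v = C (u * v) := (C_mul).symm

lemma pconj_vec (a b c : Polynomial ℝ) :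
    pconj (toQ a * C qi + toQ b * C qj + toQ c * C qk)
      = -(toQ a * C qi + toQ b * C qj + toQ c * C qk) := by
  rw [pconj_add, pconj_add, pconj_mul, pconj_mul, pconj_mul, pconj_C, pconj_C, pconj_C,
    pconj_toQ, pconj_toQ, pconj_toQ, star_qi, star_qj, star_qk, C_neg, C_neg, C_neg,
    neg_mul, neg_mul, neg_mul, sw2, sw2, sw2, neg_add, neg_add]

lemma triple (a b c : Polynomial ℝ) :
    (toQ a * C qi + toQ b * C qj + toQ c * C qk) * C qi *
        pconj (toQ a * C qi + toQ b * C qj + toQ c * C qk)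
      = toQ (a^2 - b^2 - c^2) * C qi + toQ (2*a*b) * C qj + toQ (2*a*c) * C qk := by
  rw [pconj_vec]
  simp only [mul_neg, mul_add, add_mul, mul_assoc, sw1, sw2, fuse1, fuse2, Cfuse1, Cfuse2,
    qi_mul_qi, qi_mul_qj, qi_mul_qk, qj_mul_qi, qj_mul_qj, qj_mul_qk, qk_mul_qi, qk_mul_qj,
    qk_mul_qk, neg_mul, mul_neg, one_mul, mul_one, neg_neg, C_neg, C_1]
  simp only [show b*a = a*b from mul_comm b a, show c*a = a*c from mul_comm c a,
    show c*b = b*c from mul_comm c b]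
  have h1 : toQ (a^2 - b^2 - c^2) = toQ (a*a) - toQ (b*b) - toQ (c*c) := by
    rw [map_sub, map_sub, ← pow_two, ← pow_two, ← pow_two]
  have h2 : toQ (2*(a*b)) = toQ (a*b) + toQ (a*b) := by rw [two_mul, map_add]
  have h3 : toQ (2*(a*c)) = toQ (a*c) + toQ (a*c) := by rw [two_mul, map_add]
  rw [h1, h2, h3]
  simp only [sub_mul, add_mul, neg_mul, mul_neg, neg_neg]
  abel

lemma key (p1 p2 p3 W : Polynomial ℝ) (h : p1^2 + p2^2 + p3^2 = W^2) :
    (toQ (p1+W) * C qi + toQ p2 * C qj + toQ p3 * C qk) * C qi *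
        pconj (toQ (p1+W) * C qi + toQ p2 * C qj + toQ p3 * C qk)
      = toQ (2*(p1+W)) * (toQ p1 * C qi + toQ p2 * C qj + toQ p3 * C qk) := by
  rw [triple]
  have e1 : (p1+W)^2 - p2^2 - p3^2 = 2*(p1+W)*p1 := by linear_combination -h
  have hr : toQ (2*(p1+W)) * (toQ p1 * C qi + toQ p2 * C qj + toQ p3 * C qk)
      = toQ (2*(p1+W)*p1) * C qi + toQ (2*(p1+W)*p2) * C qj + toQ (2*(p1+W)*p3) * C qk := by
    rw [mul_add, mul_add, fuse1, fuse1, fuse1]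
  rw [hr, e1]

lemma iPoly (u v : Polynomial ℝ) :
    (toQ u + toQ v * C qi) * C qi * pconj (toQ u + toQ v * C qi)
      = toQ (u^2 + v^2) * C qi := by
  have hp : pconj (toQ u + toQ v * C qi) = toQ u - toQ v * C qi := by
    rw [pconj_add, pconj_mul, pconj_C, pconj_toQ, pconj_toQ, star_qi, C_neg, neg_mul, sw2,
      ← sub_eq_add_neg]
  rw [hp]
  simp only [mul_sub, mul_add, add_mul, sub_mul, mul_assoc, sw1, sw2, fuse1, fuse2, Cfuse1,
    Cfuse2, qi_mul_qi, neg_mul, mul_neg, one_mul, mul_one, neg_neg, C_neg, C_1]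
  have h1 : toQ (u^2 + v^2) = toQ (u*u) + toQ (v*v) := by
    rw [map_add, ← pow_two, ← pow_two]
  rw [h1, add_mul]
  simp only [show v*u = u*v from mul_comm v u]
  abel

lemma toQ_injective : Function.Injective toQ := by
  intro f g h
  exact Polynomial.map_injective _ ((algebraMap ℝ (Quaternion ℝ)).injective) h

lemma toQ_ne_zero {f : Polynomial ℝ} (hf : f ≠ 0) : toQ f ≠ 0 := by
  intro h; exact hf (toQ_injective (by simpa using h))

lemma natDegree_toQ (f : Polynomial ℝ) : (toQ f).natDegree = f.natDegree :=
  natDegree_map_eq_of_injective ((algebraMap ℝ (Quaternion ℝ)).injective) f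

/-- the real part of a quaternion polynomial, as a real polynomial -/
def rePart (p : Polynomial (Quaternion ℝ)) : Polynomial ℝ :=
  p.sum fun n a => monomial n a.re
/-- the i-part of a quaternion polynomial, as a real polynomial -/
def iPart (p : Polynomial (Quaternion ℝ)) : Polynomial ℝ :=
  p.sum fun n a => monomial n a.imI

lemma rePart_coeff (p : Polynomial (Quaternion ℝ)) (n : ℕ) :
    (rePart p).coeff n = (p.coeff n).re := by
  rw [rePart, Polynomial.sum_def, finset_sum_coeff]
  simp only [coeff_monomial]
  by_cases h : n ∈ p.support
  · rw [Finset.sum_eq_single n]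
    · simp
    · intro b _ hb; simp [hb]
    · intro hn; exact absurd h hn
  · rw [Finset.sum_eq_zero]
    · simp [Polynomial.notMem_support_iff.mp h]; rfl
    · intro b hb
      by_cases hbn : b = n
      · subst hbn; exact absurd hb h
      · simp [hbn]

lemma iPart_coeff (p : Polynomial (Quaternion ℝ)) (n : ℕ) :
    (iPart p).coeff n = (p.coeff n).imI := by
  rw [iPart, Polynomial.sum_def, finset_sum_coeff]
  simp only [coeff_monomial]
  by_cases h : n ∈ p.support
  · rw [Finset.sum_eq_single n]
    · simp
    · intro b _ hb; simp [hb]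
    · intro hn; exact absurd h hn
  · rw [Finset.sum_eq_zero]
    · simp [Polynomial.notMem_support_iff.mp h]; rfl
    · intro b hb
      by_cases hbn : b = n
      · subst hbn; exact absurd hb h
      · simp [hbn]

lemma i_decomp (R : Polynomial (Quaternion ℝ))
    (hR : ∀ n, (R.coeff n).imJ = 0 ∧ (R.coeff n).imK = 0) :
    R = toQ (rePart R) + toQ (iPart R) * C qi := by
  refine Polynomial.ext fun n => ?_
  have hJ := (hR n).1
  have hK := (hR n).2
  simp only [coeff_add, coeff_mul_C, toQ, coe_mapRingHom, coeff_map, rePart_coeff, iPart_coeff]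
  ext <;>
    simp [Quaternion.re_coe, Quaternion.imI_coe, Quaternion.imJ_coe, Quaternion.imK_coe,
      hJ, hK] <;> simp [qi]

lemma sumsq_eq_zero {u v : Polynomial ℝ} (h : u^2 + v^2 = 0) : u = 0 ∧ v = 0 := by
  constructor <;>
  · apply Polynomial.funext
    intro x
    have hx := congrArg (Polynomial.eval x) h
    simp only [eval_add, eval_pow, eval_zero] at hx
    have h2 : eval x u ^ 2 = 0 ∧ eval x v ^ 2 = 0 := by
      constructor <;> nlinarith [sq_nonneg (u.eval x), sq_nonneg (v.eval x)]
    simp only [eval_zero]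
    first
      | exact (pow_eq_zero_iff two_ne_zero).mp h2.1
      | exact (pow_eq_zero_iff two_ne_zero).mp h2.2

/-- reduction lemma -/
lemma reduce (Q : Polynomial (Quaternion ℝ)) :
    ∀ n : ℕ, ∀ A : Polynomial (Quaternion ℝ), A.natDegree = n → A ≠ 0 →
      Q * (A * C qi * pconj A) = (A * C qi * pconj A) * Q →
      ∃ B : Polynomial (Quaternion ℝ), B ≠ 0 ∧ ReducedWrtI B ∧
        Q * (B * C qi * pconj B) = (B * C qi * pconj B) * Q := by
  intro n
  induction n using Nat.strong_induction_on with
  | _ n ih =>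
  intro A hn hA hcomm
  by_cases hred : ReducedWrtI A
  · exact ⟨A, hA, hred, hcomm⟩
  rw [ReducedWrtI, not_and_or] at hred
  rcases hred with h1 | h2
  · push_neg at h1
    obtain ⟨ψ, A', hAeq, hψ⟩ := h1
    have hψ0 : ψ ≠ 0 := by rintro rfl; simp [hAeq] at hA
    have hA'0 : A' ≠ 0 := by rintro rfl; simp [hAeq] at hA
    have hdeg : A'.natDegree < n := by
      rw [← hn, hAeq, natDegree_mul (toQ_ne_zero hψ0) hA'0, natDegree_toQ]
      omega
    -- M_A = toQ (ψ*ψ) * M_{A'}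
    have hM : A * C qi * pconj A = toQ (ψ*ψ) * (A' * C qi * pconj A') := by
      rw [hAeq, pconj_mul, pconj_toQ]
      simp only [mul_assoc]
      rw [show pconj A' * toQ ψ = toQ ψ * pconj A' from (toQ_comm ψ (pconj A')).symm,
        sw1, sw3, fuse1]
    have hcomm' : Q * (A' * C qi * pconj A') = (A' * C qi * pconj A') * Q := by
      have h := hcomm
      rw [hM] at h
      rw [show Q * (toQ (ψ*ψ) * (A' * C qi * pconj A'))
            = toQ (ψ*ψ) * (Q * (A' * C qi * pconj A')) from by
          rw [← mul_assoc, ← toQ_comm, mul_assoc],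
        show toQ (ψ*ψ) * (A' * C qi * pconj A') * Q
            = toQ (ψ*ψ) * ((A' * C qi * pconj A') * Q) from by rw [mul_assoc]] at h
      exact mul_left_cancel₀ (toQ_ne_zero (mul_ne_zero hψ0 hψ0)) h
    exact ih _ hdeg A' rfl hA'0 hcomm'
  · push_neg at h2
    obtain ⟨A', R, hAeq, hcoeff, hR⟩ := h2
    have hR0 : R ≠ 0 := by rintro rfl; simp [hAeq] at hA
    have hA'0 : A' ≠ 0 := by rintro rfl; simp [hAeq] at hA
    have hdeg : A'.natDegree < n := by
      rw [← hn, hAeq, natDegree_mul hA'0 hR0]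
      omega
    set u := rePart R with hu
    set v := iPart R with hv
    have hRdec : R = toQ u + toQ v * C qi := i_decomp R hcoeff
    have huv : u^2 + v^2 ≠ 0 := by
      intro h
      obtain ⟨h1, h2⟩ := sumsq_eq_zero h
      apply hR0
      rw [hRdec, h1, h2]; simp
    have hRR : ∀ x : Polynomial (Quaternion ℝ),
        R * (C qi * (pconj R * x)) = toQ (u^2+v^2) * (C qi * x) := by
      intro x
      have h0 : R * C qi * pconj R = toQ (u^2+v^2) * C qi := by
        rw [hRdec]; exact iPoly u v
      calc R * (C qi * (pconj R * x)) = (R * C qi * pconj R) * x := by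
            rw [mul_assoc, mul_assoc]
        _ = toQ (u^2+v^2) * C qi * x := by rw [h0]
        _ = toQ (u^2+v^2) * (C qi * x) := by rw [mul_assoc]
    have hM : A * C qi * pconj A = toQ (u^2+v^2) * (A' * C qi * pconj A') := by
      rw [hAeq, pconj_mul]
      simp only [mul_assoc]
      rw [hRR, sw3]
    have hcomm' : Q * (A' * C qi * pconj A') = (A' * C qi * pconj A') * Q := by
      have h := hcomm
      rw [hM] at h
      rw [show Q * (toQ (u^2+v^2) * (A' * C qi * pconj A'))
            = toQ (u^2+v^2) * (Q * (A' * C qi * pconj A')) from by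
          rw [← mul_assoc, ← toQ_comm, mul_assoc],
        show toQ (u^2+v^2) * (A' * C qi * pconj A') * Q
            = toQ (u^2+v^2) * ((A' * C qi * pconj A') * Q) from by rw [mul_assoc]] at h
      exact mul_left_cancel₀ (toQ_ne_zero huv) h
    exact ih _ hdeg A' rfl hA'0 hcomm'

lemma ratDeriv_div (r a : Polynomial ℝ) (ha : a ≠ 0) :
    ratDeriv (algebraMap (Polynomial ℝ) (RatFunc ℝ) r /
        algebraMap (Polynomial ℝ) (RatFunc ℝ) a)
      = algebraMap (Polynomial ℝ) (RatFunc ℝ) (derivative r * a - r * derivative a) /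
        algebraMap (Polynomial ℝ) (RatFunc ℝ) (a ^ 2) := by
  set aM := algebraMap (Polynomial ℝ) (RatFunc ℝ) with haM
  set f : RatFunc ℝ := aM r / aM a with hf
  have hden : f.denom ≠ 0 := f.denom_ne_zero
  have haMa : aM a ≠ 0 := by
    simp [haM, FaithfulSMul.algebraMap_eq_zero_iff, ha]
  have hdenM : aM f.denom ≠ 0 := by
    simp [haM, FaithfulSMul.algebraMap_eq_zero_iff, hden]
  have hcross : f.num * a = r * f.denom := by
    have h1 : aM f.num / aM f.denom = aM r / aM a := by
      rw [RatFunc.num_div_denom]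
    rw [div_eq_div_iff hdenM haMa] at h1
    apply IsFractionRing.injective (Polynomial ℝ) (RatFunc ℝ)
    rw [map_mul, map_mul]; exact h1
  have hcross' : derivative f.num * a + f.num * derivative a
      = derivative r * f.denom + r * derivative f.denom := by
    have h := congrArg derivative hcross
    simpa [derivative_mul] using h
  rw [ratDeriv]
  have hd2 : aM (f.denom ^ 2) ≠ 0 := by
    simp [haM, FaithfulSMul.algebraMap_eq_zero_iff, pow_eq_zero_iff, hden]
  have ha2 : aM (a ^ 2) ≠ 0 := by
    simp [haM, FaithfulSMul.algebraMap_eq_zero_iff, pow_eq_zero_iff, ha]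
  rw [div_eq_div_iff hd2 ha2, ← map_mul, ← map_mul, ← map_sub, ← map_mul, ← map_mul]
  refine congrArg _ ?_
  linear_combination (f.denom * a) * hcross'
    - (derivative f.denom * a + derivative a * f.denom) * hcross

lemma dtoQ (r : Polynomial ℝ) : derivative (toQ r) = toQ (derivative r) := by
  simp [toQ, derivative_map]

lemma am_mul_qi (x : ℝ) : algebraMap ℝ (Quaternion ℝ) x * qi = ⟨0, x, 0, 0⟩ := by
  ext <;> simp <;> simp [qi]
lemma am_mul_qj (x : ℝ) : algebraMap ℝ (Quaternion ℝ) x * qj = ⟨0, 0, x, 0⟩ := by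
  ext <;> simp <;> simp [qj]
lemma am_mul_qk (x : ℝ) : algebraMap ℝ (Quaternion ℝ) x * qk = ⟨0, 0, 0, x⟩ := by
  ext <;> simp <;> simp [qk]

/-- If `r = (r₁/α, r₂/α, r₃/α)` is a Pythagorean-hodograph curve, then
there exists a nonzero `A ∈ ℍ[t]`, reduced with respect to `i`, such that the framing
condition holds: with `b = −½(r₁i + r₂j + r₃k)`, the polynomials `α·b′ − α′·b` and `A i Ā`
commute. -/
theorem PH_implies_framing (α r₁ r₂ r₃ : Polynomial ℝ) (hα : α ≠ 0)
    (σ : RatFunc ℝ)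
    (hPH : ratDeriv (algebraMap (Polynomial ℝ) (RatFunc ℝ) r₁ /
          algebraMap (Polynomial ℝ) (RatFunc ℝ) α) ^ 2 +
        ratDeriv (algebraMap (Polynomial ℝ) (RatFunc ℝ) r₂ /
          algebraMap (Polynomial ℝ) (RatFunc ℝ) α) ^ 2 +
        ratDeriv (algebraMap (Polynomial ℝ) (RatFunc ℝ) r₃ /
          algebraMap (Polynomial ℝ) (RatFunc ℝ) α) ^ 2 = σ ^ 2) :
    ∃ A : Polynomial (Quaternion ℝ), A ≠ 0 ∧ ReducedWrtI A ∧
      (toQ α * derivative ((-(2⁻¹ : ℝ)) •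
          (toQ r₁ * Polynomial.C qi + toQ r₂ * Polynomial.C qj + toQ r₃ * Polynomial.C qk)) -
        toQ (derivative α) * ((-(2⁻¹ : ℝ)) •
          (toQ r₁ * Polynomial.C qi + toQ r₂ * Polynomial.C qj + toQ r₃ * Polynomial.C qk))) *
        (A * Polynomial.C qi * pconj A)
      = (A * Polynomial.C qi * pconj A) *
        (toQ α * derivative ((-(2⁻¹ : ℝ)) •
          (toQ r₁ * Polynomial.C qi + toQ r₂ * Polynomial.C qj + toQ r₃ * Polynomial.C qk)) -
        toQ (derivative α) * ((-(2⁻¹ : ℝ)) •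
          (toQ r₁ * Polynomial.C qi + toQ r₂ * Polynomial.C qj + toQ r₃ * Polynomial.C qk))) := by
  classical
  set aM := algebraMap (Polynomial ℝ) (RatFunc ℝ) with haM
  set p1 := derivative r₁ * α - r₁ * derivative α with hp1
  set p2 := derivative r₂ * α - r₂ * derivative α with hp2
  set p3 := derivative r₃ * α - r₃ * derivative α with hp3
  rw [ratDeriv_div r₁ α hα, ratDeriv_div r₂ α hα, ratDeriv_div r₃ α hα] at hPH
  have ha2 : aM (α ^ 2) ≠ 0 := by
    simp [haM, FaithfulSMul.algebraMap_eq_zero_iff, pow_eq_zero_iff, hα]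
  have hsum : (σ * aM (α ^ 2)) ^ 2 = aM (p1 ^ 2 + p2 ^ 2 + p3 ^ 2) := by
    rw [← hp1, ← hp2, ← hp3] at hPH
    rw [div_pow, div_pow, div_pow, ← add_div, ← add_div,
      div_eq_iff (pow_ne_zero 2 ha2)] at hPH
    calc (σ * aM (α ^ 2)) ^ 2 = σ ^ 2 * aM (α ^ 2) ^ 2 := by ring
      _ = aM p1 ^ 2 + aM p2 ^ 2 + aM p3 ^ 2 := hPH.symm
      _ = aM (p1 ^ 2 + p2 ^ 2 + p3 ^ 2) := by
            rw [map_add, map_add, map_pow, map_pow, map_pow]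
  -- get the polynomial square root W
  have hint : IsIntegral (Polynomial ℝ) (σ * aM (α ^ 2)) := by
    refine ⟨X ^ 2 - C (p1 ^ 2 + p2 ^ 2 + p3 ^ 2),
      monic_X_pow_sub_C _ two_ne_zero, ?_⟩
    rw [eval₂_sub, eval₂_pow, eval₂_X, eval₂_C, sub_eq_zero]
    exact hsum
  obtain ⟨W, hW⟩ := IsIntegrallyClosed.isIntegral_iff.mp hint
  have hWsq : p1 ^ 2 + p2 ^ 2 + p3 ^ 2 = W ^ 2 := by
    apply IsFractionRing.injective (Polynomial ℝ) (RatFunc ℝ)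
    rw [map_pow]
    rw [show (algebraMap (Polynomial ℝ) (RatFunc ℝ)) W = σ * aM (α ^ 2) from hW]
    exact hsum.symm
  -- the vector polynomial Qp
  set Qp : Polynomial (Quaternion ℝ) := toQ p1 * C qi + toQ p2 * C qj + toQ p3 * C qk
    with hQp
  -- P = (-1/2) • Qp
  set bb : Polynomial (Quaternion ℝ) := toQ r₁ * C qi + toQ r₂ * C qj + toQ r₃ * C qk
    with hbb
  have hP : toQ α * derivative ((-(2⁻¹ : ℝ)) • bb) -
      toQ (derivative α) * ((-(2⁻¹ : ℝ)) • bb) = (-(2⁻¹ : ℝ)) • Qp := by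
    rw [derivative_smul, mul_smul_comm, mul_smul_comm, ← smul_sub]
    congr 1
    have e : ∀ f g u v : Polynomial ℝ, ∀ cq : Quaternion ℝ,
        toQ f * (toQ u * C cq) - toQ g * (toQ v * C cq) = toQ (f * u - g * v) * C cq := by
      intro f g u v cq
      rw [fuse1, fuse1, ← sub_mul, ← map_sub]
    have h1 : toQ α * (toQ (derivative r₁) * C qi)
        - toQ (derivative α) * (toQ r₁ * C qi) = toQ p1 * C qi := by
      rw [e, show α * derivative r₁ - derivative α * r₁ = p1 from by rw [hp1]; ring]
    have h2 : toQ α * (toQ (derivative r₂) * C qj)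
        - toQ (derivative α) * (toQ r₂ * C qj) = toQ p2 * C qj := by
      rw [e, show α * derivative r₂ - derivative α * r₂ = p2 from by rw [hp2]; ring]
    have h3 : toQ α * (toQ (derivative r₃) * C qk)
        - toQ (derivative α) * (toQ r₃ * C qk) = toQ p3 * C qk := by
      rw [e, show α * derivative r₃ - derivative α * r₃ = p3 from by rw [hp3]; ring]
    rw [hbb, hQp]
    simp only [derivative_add, derivative_mul, derivative_C, mul_zero, add_zero, dtoQ]
    rw [mul_add, mul_add, mul_add, mul_add, ← h1, ← h2, ← h3]
    abel
  -- existence of a nonzero A1 whose frame vector commutes with Qp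
  have hA1 : ∃ A1 : Polynomial (Quaternion ℝ), A1 ≠ 0 ∧
      Qp * (A1 * C qi * pconj A1) = (A1 * C qi * pconj A1) * Qp := by
    by_cases hA0 : toQ (p1 + W) * C qi + toQ p2 * C qj + toQ p3 * C qk = 0
    · -- degenerate case : use A1 = 1
      have hcomp : p2 = 0 ∧ p3 = 0 := by
        have key0 : ∀ n : ℕ, p2.coeff n = 0 ∧ p3.coeff n = 0 := by
          intro n
          have h := congrArg (fun p : Polynomial (Quaternion ℝ) => p.coeff n) hA0
          simp only [coeff_add, coeff_mul_C, toQ, coe_mapRingHom, coeff_map, coeff_zero,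
            am_mul_qi, am_mul_qj, am_mul_qk] at h
          rw [Quaternion.ext_iff] at h
          obtain ⟨-, -, hJ, hK⟩ := h
          simp only [Quaternion.imJ_add, Quaternion.imK_add, Quaternion.imJ_zero,
            Quaternion.imK_zero] at hJ hK
          constructor
          · have h2 : (0:ℝ) + p2.coeff n + 0 = 0 := hJ; simpa using h2
          · have h3 : (0:ℝ) + 0 + p3.coeff n = 0 := hK; simpa using h3
        exact ⟨Polynomial.ext fun n => (key0 n).1, Polynomial.ext fun n => (key0 n).2⟩
      refine ⟨1, one_ne_zero, ?_⟩
      rw [pconj_one, one_mul, mul_one, hQp, hcomp.1, hcomp.2]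
      simp only [map_zero, zero_mul, add_zero]
      rw [mul_assoc, sw1]
    · refine ⟨_, hA0, ?_⟩
      rw [key p1 p2 p3 W hWsq, ← hQp]
      rw [sw3, ← mul_assoc]
  obtain ⟨A1, hA10, hA1comm⟩ := hA1
  obtain ⟨B, hB0, hBred, hBcomm⟩ := reduce Qp A1.natDegree A1 rfl hA10 hA1comm
  refine ⟨B, hB0, hBred, ?_⟩
  rw [hP, smul_mul_assoc, mul_smul_comm, hBcomm]
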